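/- The PBW star product and the symmetrizer star product on Pol(𝔤*) are gauge equivalent: the map T = Sym⁻¹ ∘ ψ_PBW (composition of the PBW isomorphism with the inverse of the symmetrizer isomorphism) is a ℂ[[h]]-module automorphism of Pol(𝔤*)[[h]] equal to the identity mod h, intertwining the two star products. -/

import Mathlib

open MvPolynomial

noncomputable section

abbrev Rh := PowerSeries ℂ

/-- The relation generating the ideal L_h ⊂ T_{ℂ[[h]]}(𝔤):
X_i ⊗ X_j − X_j ⊗ X_i − h[X_i, X_j], written in a basis with structure constants c. -/
def uhRel {n : ℕ} (c : Fin n → Fin n → Fin n → ℂ) :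
    FreeAlgebra Rh (Fin n) → FreeAlgebra Rh (Fin n) → Prop :=
  fun a b => ∃ i j : Fin n,
    a = FreeAlgebra.ι Rh i * FreeAlgebra.ι Rh j ∧
    b = FreeAlgebra.ι Rh j * FreeAlgebra.ι Rh i
        + ∑ k, (PowerSeries.X * PowerSeries.C (c i j k)) • FreeAlgebra.ι Rh k

/-- U_h = T_{ℂ[[h]]}(𝔤)/L_h. -/
def Uh {n : ℕ} (c : Fin n → Fin n → Fin n → ℂ) := RingQuot (uhRel c)

instance {n : ℕ} (c : Fin n → Fin n → Fin n → ℂ) : Ring (Uh c) := by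
  unfold Uh; infer_instance

instance {n : ℕ} (c : Fin n → Fin n → Fin n → ℂ) : Algebra Rh (Uh c) := by
  unfold Uh; infer_instance

/-- The generator X_i of U_h. -/
def uhGen {n : ℕ} (c : Fin n → Fin n → Fin n → ℂ) (i : Fin n) : Uh c :=
  RingQuot.mkAlgHom Rh (uhRel c) (FreeAlgebra.ι Rh i)

/-- The ordered (PBW) monomial X₁^{d₁} ⋯ Xₙ^{dₙ} in U_h. -/
def pbwMonomial {n : ℕ} (c : Fin n → Fin n → Fin n → ℂ) (d : Fin n →₀ ℕ) : Uh c :=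
  ((List.finRange n).map fun i => uhGen c i ^ d i).prod

/-- The PBW linear isomorphism candidate Pol(𝔤*)[[h]] → U_h (with Pol(𝔤*)[[h]]
modelled by polynomials with coefficients in ℂ[[h]]), sending an ordered monomial to
the corresponding ordered product of generators. -/
def pbwMap {n : ℕ} (c : Fin n → Fin n → Fin n → ℂ)
    (f : MvPolynomial (Fin n) Rh) : Uh c :=
  ∑ d ∈ f.support, f.coeff d • pbwMonomial c d

/-- Reduction mod h: specializing the coefficients at h = 0. -/
def epsh {n : ℕ} (f : MvPolynomial (Fin n) Rh) : MvPolynomial (Fin n) ℂ :=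
  MvPolynomial.map (PowerSeries.constantCoeff (R := ℂ)) f

/-- The coefficient of h¹. -/
def coeffOneh {n : ℕ} (f : MvPolynomial (Fin n) Rh) : MvPolynomial (Fin n) ℂ :=
  ∑ d ∈ f.support, MvPolynomial.monomial d (PowerSeries.coeff (R := ℂ) 1 (f.coeff d))

/-- The Lie–Poisson bracket on Pol(𝔤*) in coordinates. -/
def polPB {n : ℕ} (c : Fin n → Fin n → Fin n → ℂ)
    (p q : MvPolynomial (Fin n) ℂ) : MvPolynomial (Fin n) ℂ :=
  ∑ i, ∑ j, ∑ k, MvPolynomial.C (c i j k) * X k * pderiv i p * pderiv j q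

end

noncomputable section

def uhSymMonomial {n : ℕ} (c : Fin n → Fin n → Fin n → ℂ) (d : Fin n →₀ ℕ) : Uh c :=
  let lst := (Finsupp.toMultiset d).sort (· ≤ ·)
  PowerSeries.C ((lst.length.factorial : ℂ))⁻¹ •
    ∑ σ : Equiv.Perm (Fin lst.length),
      (List.ofFn fun t : Fin lst.length => uhGen c (lst.get (σ t))).prod

/-- The symmetrizer ℂ[[h]]-module map Sym : Pol(𝔤*)[[h]] → U_h. -/
def uhSymR {n : ℕ} (c : Fin n → Fin n → Fin n → ℂ) (f : MvPolynomial (Fin n) Rh) :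
    Uh c :=
  ∑ d ∈ f.support, f.coeff d • uhSymMonomial c d

end

noncomputable section GaugeAux

variable {n : ℕ}

instance epsAlgebra : Algebra Rh (MvPolynomial (Fin n) ℂ) :=
  RingHom.toAlgebra ((MvPolynomial.C : ℂ →+* MvPolynomial (Fin n) ℂ).comp
    (PowerSeries.constantCoeff (R := ℂ)))

lemma epsAlgebraMap (r : Rh) :
    algebraMap Rh (MvPolynomial (Fin n) ℂ) r = C (PowerSeries.constantCoeff (R := ℂ) r) := rfl

variable (c : Fin n → Fin n → Fin n → ℂ)

def epsHom : Uh c →ₐ[Rh] MvPolynomial (Fin n) ℂ :=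
  RingQuot.liftAlgHom Rh ⟨FreeAlgebra.lift Rh (fun i => X i), by
    rintro a b ⟨i, j, rfl, rfl⟩
    have h0 : ∀ k, ((PowerSeries.X * PowerSeries.C (c i j k)) •
        (X k : MvPolynomial (Fin n) ℂ)) = 0 := by
      intro k
      rw [Algebra.smul_def, epsAlgebraMap]
      simp
    simp only [map_mul, map_add, map_sum, map_smul, FreeAlgebra.lift_ι_apply, h0,
      Finset.sum_const_zero, add_zero]
    exact mul_comm _ _⟩

lemma epsHom_gen (i : Fin n) : epsHom c (uhGen c i) = X i := by
  unfold epsHom uhGen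
  refine Eq.trans (RingQuot.liftAlgHom_mkAlgHom_apply Rh
    (FreeAlgebra.lift Rh (fun i => (X i : MvPolynomial (Fin n) ℂ))) ?_ (FreeAlgebra.ι Rh i))
    (by simp)
  · rintro a b ⟨i, j, rfl, rfl⟩
    have h0 : ∀ k, ((PowerSeries.X * PowerSeries.C (c i j k)) •
        (X k : MvPolynomial (Fin n) ℂ)) = 0 := by
      intro k
      rw [Algebra.smul_def, epsAlgebraMap]
      simp
    simp only [map_mul, map_add, map_sum, map_smul, FreeAlgebra.lift_ι_apply, h0,
      Finset.sum_const_zero, add_zero]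
    exact mul_comm _ _

lemma list_prod_X (l : List (Fin n)) :
    (l.map (fun i => (X i : MvPolynomial (Fin n) ℂ))).prod
      = monomial (↑l : Multiset (Fin n)).toFinsupp 1 := by
  induction l with
  | nil => simp
  | cons a l ih =>
      rw [List.map_cons, List.prod_cons, ih]
      have h1 : ((a :: l : List (Fin n)) : Multiset (Fin n)) = {a} + (↑l : Multiset (Fin n)) := by
        rw [Multiset.singleton_add]; rfl
      have h2 : (X a : MvPolynomial (Fin n) ℂ) = monomial (Finsupp.single a 1) 1 := by
        rw [← X_pow_eq_monomial, pow_one]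
      rw [h1, Multiset.toFinsupp_add, Multiset.toFinsupp_singleton, h2, monomial_mul,
        one_mul]

lemma epsHom_pbwMonomial (d : Fin n →₀ ℕ) : epsHom c (pbwMonomial c d) = monomial d 1 := by
  unfold pbwMonomial
  rw [map_list_prod, List.map_map]
  have h1 : (List.finRange n).map ((epsHom c) ∘ fun i => uhGen c i ^ d i)
      = (List.finRange n).map (fun i => (X i : MvPolynomial (Fin n) ℂ) ^ d i) := by
    refine congrArg (fun F => List.map F (List.finRange n)) (funext fun i => ?_)
    simp [map_pow, epsHom_gen]
  rw [h1, ← List.ofFn_eq_map, List.prod_ofFn, monomial_eq, C_1, one_mul, Finsupp.prod_pow]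

lemma epsHom_symMonomial (d : Fin n →₀ ℕ) :
    epsHom c (uhSymMonomial c d) = monomial d 1 := by
  unfold uhSymMonomial
  set l := (Finsupp.toMultiset d).sort (· ≤ ·) with hl
  rw [map_smul, map_sum]
  have hσ : ∀ σ : Equiv.Perm (Fin l.length),
      epsHom c (List.ofFn fun t => uhGen c (l.get (σ t))).prod = monomial d 1 := by
    intro σ
    rw [map_list_prod, List.map_ofFn, List.prod_ofFn]
    have h2 : ∀ t, ((epsHom c) ∘ fun t => uhGen c (l.get (σ t))) t
        = (X (l.get (σ t)) : MvPolynomial (Fin n) ℂ) := fun t => by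
      simp [epsHom_gen]
    rw [Finset.prod_congr rfl (fun t _ => h2 t),
      Equiv.prod_comp σ (fun t => (X (l.get t) : MvPolynomial (Fin n) ℂ))]
    have h3 : (List.ofFn fun t => (X (l.get t) : MvPolynomial (Fin n) ℂ))
        = l.map (fun i => (X i : MvPolynomial (Fin n) ℂ)) := by
      have := List.map_ofFn (f := l.get) (g := fun i => (X i : MvPolynomial (Fin n) ℂ))
      rw [List.ofFn_get] at this
      rw [this]; rfl
    rw [← List.prod_ofFn, h3, list_prod_X]
    have h4 : (↑l : Multiset (Fin n)) = Finsupp.toMultiset d := Multiset.sort_eq _ _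
    rw [h4]
    simp
  rw [Finset.sum_congr rfl (fun σ _ => hσ σ), Finset.sum_const, Finset.card_univ,
    Fintype.card_perm, Fintype.card_fin, Algebra.smul_def, epsAlgebraMap, PowerSeries.constantCoeff_C,
    nsmul_eq_mul]
  have h5 : ((l.length.factorial : MvPolynomial (Fin n) ℂ)) = C (l.length.factorial : ℂ) := by
    simp
  rw [h5, ← mul_assoc, ← C_mul, inv_mul_cancel₀ (by exact_mod_cast Nat.factorial_ne_zero _),
    C_1, one_mul]

lemma epsh_as_sum (f : MvPolynomial (Fin n) Rh) :
    epsh f = ∑ d ∈ f.support, monomial d (PowerSeries.constantCoeff (R := ℂ) (f.coeff d)) := by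
  unfold epsh
  conv_lhs => rw [f.as_sum]
  rw [map_sum]
  simp [map_monomial]

lemma epsHom_pbwMap (f : MvPolynomial (Fin n) Rh) :
    epsHom c (pbwMap c f) = epsh f := by
  unfold pbwMap
  rw [map_sum, epsh_as_sum]
  refine Finset.sum_congr rfl fun d _ => ?_
  rw [map_smul, epsHom_pbwMonomial, Algebra.smul_def, epsAlgebraMap, C_mul_monomial, mul_one]

lemma epsHom_uhSymR (f : MvPolynomial (Fin n) Rh) :
    epsHom c (uhSymR c f) = epsh f := by
  unfold uhSymR
  rw [map_sum, epsh_as_sum]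
  refine Finset.sum_congr rfl fun d _ => ?_
  rw [map_smul, epsHom_symMonomial, Algebra.smul_def, epsAlgebraMap, C_mul_monomial, mul_one]

lemma sumSupport_lin (m : (Fin n →₀ ℕ) → Uh c) (r : Rh) (f g : MvPolynomial (Fin n) Rh) :
    (∑ d ∈ (r • f + g).support, (r • f + g).coeff d • m d)
      = r • (∑ d ∈ f.support, f.coeff d • m d) + ∑ d ∈ g.support, g.coeff d • m d := by
  have key : ∀ h : MvPolynomial (Fin n) Rh,
      (∑ d ∈ h.support, h.coeff d • m d) = Finsupp.sum (AddMonoidAlgebra.coeff h) fun d a => a • m d := fun h =>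
        (MvPolynomial.sum_def (b := fun d a => a • m d)).symm
  rw [key, key, key, AddMonoidAlgebra.coeff_add, AddMonoidAlgebra.coeff_smul,
    Finsupp.sum_add_index' (fun d => zero_smul Rh (m d)) (fun d a b => add_smul a b (m d)),
    Finsupp.sum_smul_index' (fun d => zero_smul Rh (m d)), Finsupp.smul_sum]
  congr 1
  exact Finsupp.sum_congr fun d _ => by rw [smul_eq_mul, mul_smul]

end GaugeAux

/-- the PBW star product and the symmetrizer star product are gauge
equivalent: T = Sym⁻¹ ∘ ψ_PBW is a ℂ[[h]]-linear bijection of Pol(𝔤*)[[h]], equal to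
the identity mod h, and it intertwines the star product induced by ψ_PBW with the one
induced by Sym (both maps being bijective, by the PBW theorem, which we assume). -/
theorem pbw_sym_gauge_equivalent {L : Type*} [LieRing L] [LieAlgebra ℂ L]
    [Module.Finite ℂ L] {n : ℕ} (b : Module.Basis (Fin n) ℂ L)
    (c : Fin n → Fin n → Fin n → ℂ)
    (hc : ∀ i j, ⁅b i, b j⁆ = ∑ k, c i j k • b k)
    (hpbw : Function.Bijective (pbwMap c))
    (hsym : Function.Bijective (uhSymR c)) :
    let T : MvPolynomial (Fin n) Rh → MvPolynomial (Fin n) Rh :=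
      fun f => (Equiv.ofBijective (uhSymR c) hsym).symm (pbwMap c f)
    Function.Bijective T ∧
    (∀ (r : Rh) (f g : MvPolynomial (Fin n) Rh), T (r • f + g) = r • T f + T g) ∧
    (∀ f, epsh (T f) = epsh f) ∧
    (∀ f₁ f₂ : MvPolynomial (Fin n) Rh,
      T ((Equiv.ofBijective (pbwMap c) hpbw).symm (pbwMap c f₁ * pbwMap c f₂))
        = (Equiv.ofBijective (uhSymR c) hsym).symm
            (uhSymR c (T f₁) * uhSymR c (T f₂))) := by
  intro T
  have hT : ∀ f : MvPolynomial (Fin n) Rh, uhSymR c (T f) = pbwMap c f := fun f =>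
    (Equiv.ofBijective (uhSymR c) hsym).apply_symm_apply (pbwMap c f)
  refine ⟨?_, ?_, ?_, ?_⟩
  · exact ((Equiv.ofBijective (uhSymR c) hsym).symm.bijective).comp hpbw
  · intro r f g
    have h1 : pbwMap c (r • f + g) = r • pbwMap c f + pbwMap c g :=
      sumSupport_lin c (pbwMonomial c) r f g
    have h2 : uhSymR c (r • T f + T g) = r • uhSymR c (T f) + uhSymR c (T g) :=
      sumSupport_lin c (uhSymMonomial c) r (T f) (T g)
    show (Equiv.ofBijective (uhSymR c) hsym).symm (pbwMap c (r • f + g)) = _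
    rw [Equiv.symm_apply_eq, Equiv.ofBijective_apply, h2, hT, hT, h1]
  · intro f
    have h1 : epsHom c (uhSymR c (T f)) = epsHom c (pbwMap c f) := by rw [hT]
    rw [epsHom_uhSymR, epsHom_pbwMap] at h1
    exact h1
  · intro f₁ f₂
    have h1 : pbwMap c ((Equiv.ofBijective (pbwMap c) hpbw).symm
        (pbwMap c f₁ * pbwMap c f₂)) = pbwMap c f₁ * pbwMap c f₂ :=
      (Equiv.ofBijective (pbwMap c) hpbw).apply_symm_apply _
    show (Equiv.ofBijective (uhSymR c) hsym).symm (pbwMap c _) = _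
    rw [h1, hT f₁, hT f₂]
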